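/- The number of minimal marked permutations, up to isomorphism, is exactly 87. Equivalently: the number of pairs (w, m), where w is a bijection of {1,…,n} to itself for some n ≥ 1 and m ∈ {1,…,n}, such that in the permutation structure on {1,…,n} given by the usual order < together with the order i ≺ j ⟺ w⁻¹(i) < w⁻¹(j), every element other than m is a neighbor of m, equals 87. -/

import Mathlib

/-- A permutation: a finite set equipped with two linear orders. -/
structure Perm2 : Type 1 where
  A : Type
  fin : Fintype A
  ord1 : LinearOrder A
  ord2 : LinearOrder A

attribute [instance] Perm2.fin

/-- Two distinct elements are adjacent for the linear order `r` if no element lies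
strictly between them. -/
def Adj {α : Type} (r : LinearOrder α) (x y : α) : Prop :=
  x ≠ y ∧ ¬∃ z : α, (r.lt x z ∧ r.lt z y) ∨ (r.lt y z ∧ r.lt z x)

/-- Two elements of a permutation are neighbors if they are adjacent for either of the
two orders. -/
def Neighbors (X : Perm2) (x y : X.A) : Prop :=
  Adj X.ord1 x y ∨ Adj X.ord2 x y

/-- The normalized permutation on {1,…,n} (modelled by `Fin n`) determined by a
bijection w: the first order is the usual one, and i ≺ j ⟺ w⁻¹(i) < w⁻¹(j). -/
def mkPerm (n : ℕ) (w : Equiv.Perm (Fin n)) : Perm2 where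
  A := Fin n
  fin := inferInstance
  ord1 := inferInstance
  ord2 := LinearOrder.lift' (fun i => w.symm i) w.symm.injective

-- decidability
instance decAdj {α : Type} [Fintype α] (r : LinearOrder α) (x y : α) :
    Decidable (Adj r x y) := by
  unfold Adj
  letI := r.toDecidableEq
  letI := r.toDecidableLT
  exact inferInstance

instance decNeighbors (X : Perm2) (x y : X.A) : Decidable (Neighbors X x y) := by
  unfold Neighbors
  infer_instance

instance decNeighborsMk (n : ℕ) (w : Equiv.Perm (Fin n)) (m y : Fin n) :
    Decidable (Neighbors (mkPerm n w) m y) :=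
  decNeighbors (mkPerm n w) m y

-- adjacency injectivity lemmas
lemma adj_inj_lt {α : Type} (r : LinearOrder α) {m y1 y2 : α}
    (h1 : Adj r m y1) (h2 : Adj r m y2)
    (l1 : r.lt m y1) (l2 : r.lt m y2) : y1 = y2 := by
  letI := r
  by_contra hne
  rcases lt_or_gt_of_ne hne with h | h
  · exact h2.2 ⟨y1, Or.inl ⟨l1, h⟩⟩
  · exact h1.2 ⟨y2, Or.inl ⟨l2, h⟩⟩

lemma adj_inj_gt {α : Type} (r : LinearOrder α) {m y1 y2 : α}
    (h1 : Adj r m y1) (h2 : Adj r m y2)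
    (l1 : r.lt y1 m) (l2 : r.lt y2 m) : y1 = y2 := by
  letI := r
  by_contra hne
  rcases lt_or_gt_of_ne hne with h | h
  · exact h1.2 ⟨y2, Or.inr ⟨h, l2⟩⟩
  · exact h2.2 ⟨y1, Or.inr ⟨h, l1⟩⟩

lemma lt_of_ne' {α : Type} (r : LinearOrder α) {x y : α} (h : y ≠ x)
    (h2 : ¬ r.lt x y) : r.lt y x := by
  letI := r
  exact (h.lt_or_gt).resolve_right h2

lemma perm2_card_le (X : Perm2) (m : X.A)
    (h : ∀ y, y ≠ m → Neighbors X m y) :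
    Fintype.card X.A ≤ 5 := by
  classical
  have key : ∃ f : X.A → Fin 5, Function.Injective f := by
    refine ⟨fun y =>
      if y = m then 0
      else if Adj X.ord1 m y then (if X.ord1.lt m y then 1 else 2)
      else (if X.ord2.lt m y then 3 else 4), ?_⟩
    intro y1 y2 heq
    by_contra hne
    simp only at heq
    by_cases e1 : y1 = m
    · by_cases e2 : y2 = m
      · exact hne (e1.trans e2.symm)
      · rw [if_pos e1, if_neg e2] at heq
        split_ifs at heq <;> exact absurd heq (by decide)
    · by_cases e2 : y2 = m
      · rw [if_neg e1, if_pos e2] at heq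
        split_ifs at heq <;> exact absurd heq (by decide)
      · rw [if_neg e1, if_neg e2] at heq
        by_cases a1 : Adj X.ord1 m y1 <;> by_cases a2 : Adj X.ord1 m y2
        · rw [if_pos a1, if_pos a2] at heq
          by_cases l1 : X.ord1.lt m y1 <;> by_cases l2 : X.ord1.lt m y2
          · exact hne (adj_inj_lt X.ord1 a1 a2 l1 l2)
          · rw [if_pos l1, if_neg l2] at heq; exact absurd heq (by decide)
          · rw [if_neg l1, if_pos l2] at heq; exact absurd heq (by decide)
          · exact hne (adj_inj_gt X.ord1 a1 a2 (lt_of_ne' X.ord1 e1 l1)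
              (lt_of_ne' X.ord1 e2 l2))
        · rw [if_pos a1, if_neg a2] at heq
          split_ifs at heq <;> exact absurd heq (by decide)
        · rw [if_neg a1, if_pos a2] at heq
          split_ifs at heq <;> exact absurd heq (by decide)
        · rw [if_neg a1, if_neg a2] at heq
          have b1 : Adj X.ord2 m y1 := (h y1 e1).resolve_left a1
          have b2 : Adj X.ord2 m y2 := (h y2 e2).resolve_left a2
          by_cases l1 : X.ord2.lt m y1 <;> by_cases l2 : X.ord2.lt m y2
          · exact hne (adj_inj_lt X.ord2 b1 b2 l1 l2)
          · rw [if_pos l1, if_neg l2] at heq; exact absurd heq (by decide)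
          · rw [if_neg l1, if_pos l2] at heq; exact absurd heq (by decide)
          · exact hne (adj_inj_gt X.ord2 b1 b2 (lt_of_ne' X.ord2 e1 l1)
              (lt_of_ne' X.ord2 e2 l2))
  obtain ⟨f, hf⟩ := key
  simpa using Fintype.card_le_of_injective f hf

lemma mkPerm_bound (n : ℕ) (w : Equiv.Perm (Fin n)) (m : Fin n)
    (h : ∀ y : Fin n, y ≠ m → Neighbors (mkPerm n w) m y) : n < 6 := by
  have := perm2_card_le (mkPerm n w) m h
  have h2 : Fintype.card (Fin n) ≤ 5 := this
  simp at h2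
  omega

set_option maxRecDepth 100000 in
set_option maxHeartbeats 4000000 in
/-- There are exactly 87 minimal marked permutations up to isomorphism: the number of
pairs (w, m) with w a bijection of {1,…,n} for some n ≥ 1 and m a marked point such that
every other element is a neighbor of m, equals 87. -/
theorem card_minimal_marked_permutations :
    Nat.card {p : Σ n : ℕ, Equiv.Perm (Fin n) × Fin n //
      ∀ y : Fin p.1, y ≠ p.2.2 → Neighbors (mkPerm p.1 p.2.1) p.2.2 y} = 87 := by
  have e : {p : Σ n : ℕ, Equiv.Perm (Fin n) × Fin n //
      ∀ y : Fin p.1, y ≠ p.2.2 → Neighbors (mkPerm p.1 p.2.1) p.2.2 y} ≃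
      {p : Σ n : Fin 6, Equiv.Perm (Fin n) × Fin n //
      ∀ y : Fin p.1, y ≠ p.2.2 → Neighbors (mkPerm p.1 p.2.1) p.2.2 y} :=
    { toFun := fun p => ⟨⟨⟨p.1.1, mkPerm_bound p.1.1 p.1.2.1 p.1.2.2 p.2⟩, p.1.2⟩, p.2⟩
      invFun := fun q => ⟨⟨q.1.1, q.1.2⟩, q.2⟩
      left_inv := fun p => rfl
      right_inv := fun q => rfl }
  rw [Nat.card_congr e, Nat.card_eq_fintype_card]
  decide
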